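/- arXiv:0711.0909 — 5 statements merged into one kernel-verified Lean document; each statement's English description precedes it below -/
import Mathlib

section
/- A polynomial P in C[x_1,...,x_n] is quasi-symmetric if and only if P is symmetric under the quasi-symmetrizing action of S_n in Hivert's sense; moreover the set of quasi-symmetric polynomials in n variables forms a subring of C[x_1,...,x_n]. -/
open MvPolynomial

/-- The composition obtained from an exponent vector by deleting its zero parts. -/
def qcomp {n : ℕ} (ν : Fin n →₀ ℕ) : List ℕ :=
  (List.ofFn fun i => ν i).filter (· ≠ 0)

/-- A quasi-symmetric polynomial. -/
def IsQuasiSym {n : ℕ} (P : MvPolynomial (Fin n) ℂ) : Prop :=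
  ∀ ν μ : Fin n →₀ ℕ, qcomp ν = qcomp μ → P.coeff ν = P.coeff μ

/-- Hivert's quasi-symmetrizing action on an exponent vector: if `ν` is supported on
`i₁ < … < i_l` with exponents `k₁, …, k_l`, the result is supported on the sorted list
`j₁ < … < j_l` of `σ(supp ν)`, with the same exponents `k₁, …, k_l` in order. -/
noncomputable def hivertExp {n : ℕ} (σ : Equiv.Perm (Fin n)) (ν : Fin n →₀ ℕ) : Fin n →₀ ℕ :=
  Finsupp.equivFunOnFinite.symm fun j =>
    ((ν.support.sort (· ≤ ·)).map ν).getD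
      (((ν.support.image σ).sort (· ≤ ·)).idxOf j) 0

/-- Hivert's quasi-symmetrizing action of a permutation on a polynomial,
extended linearly from monomials. -/
noncomputable def hivertAct {n : ℕ} (σ : Equiv.Perm (Fin n))
    (P : MvPolynomial (Fin n) ℂ) : MvPolynomial (Fin n) ℂ :=
  (AddMonoidAlgebra.coeff P).sum fun ν c => monomial (hivertExp σ ν) c

theorem List.eq_of_perm_of_sorted {α : Type*} [Preorder α] {l₁ l₂ : List α} (hp : l₁.Perm l₂)
    (hs₁ : l₁.Pairwise (· < ·)) (hs₂ : l₂.Pairwise (· < ·)) : l₁ = l₂ :=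
  List.Perm.eq_of_pairwise (fun _ _ _ _ h1 h2 => absurd h1 (lt_asymm h2)) hs₁ hs₂ hp

theorem Finset.sort_sorted_lt {α : Type*} [LinearOrder α] (s : Finset α) :
    (s.sort (· ≤ ·)).Pairwise (· < ·) :=
  (Finset.sortedLT_sort s).pairwise

namespace QSaux

variable {n : ℕ}

/-- The sorted list of the support of a finsupp on `Fin n`. -/
def sKey (ν : Fin n →₀ ℕ) : List (Fin n) := ν.support.sort (· ≤ ·)

lemma sKey_nodup (ν : Fin n →₀ ℕ) : (sKey ν).Nodup := Finset.sort_nodup _ _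

lemma sKey_sorted (ν : Fin n →₀ ℕ) : (sKey ν).Pairwise (· < ·) := Finset.sort_sorted_lt _

lemma mem_sKey {ν : Fin n →₀ ℕ} {i : Fin n} : i ∈ sKey ν ↔ ν i ≠ 0 := by
  rw [sKey, Finset.mem_sort, Finsupp.mem_support_iff]

lemma qcomp_eq_map (ν : Fin n →₀ ℕ) : qcomp ν = (sKey ν).map ν := by
  have h1 : qcomp ν = ((List.finRange n).filter (fun i => (ν i ≠ 0 : Prop))).map ν := by
    rw [qcomp, List.ofFn_eq_map, List.filter_map]
    rfl
  rw [h1]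
  congr 1
  refine List.eq_of_perm_of_sorted
    (List.perm_of_nodup_nodup_toFinset_eq ((List.nodup_finRange n).filter _) (sKey_nodup ν) ?_)
    ((List.pairwise_lt_finRange n).filter _) (sKey_sorted ν)
  ext i
  simp [mem_sKey]

lemma qcomp_eq_nil {ν : Fin n →₀ ℕ} : qcomp ν = [] ↔ ν = 0 := by
  rw [qcomp_eq_map, sKey]
  constructor
  · intro h
    have h2 : ν.support.sort (· ≤ ·) = [] := by
      cases hh : ν.support.sort (· ≤ ·) with
      | nil => rfl
      | cons a l => rw [hh] at h; simp at h
    have : ν.support = ∅ := by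
      rw [← Finset.sort_toFinset ν.support (· ≤ ·), h2]; rfl
    exact Finsupp.support_eq_empty.mp this
  · intro h; subst h; simp

lemma finsupp_ext {ν μ : Fin n →₀ ℕ} (hs : ν.support = μ.support)
    (hm : (sKey ν).map ν = (sKey μ).map μ) : ν = μ := by
  have hk : sKey μ = sKey ν := by rw [sKey, sKey, hs]
  rw [hk] at hm
  have hall := List.map_inj_left.mp hm
  ext i
  by_cases h : i ∈ ν.support
  · exact hall i (by rw [mem_sKey]; exact Finsupp.mem_support_iff.mp h)
  · have h2 : i ∉ μ.support := hs ▸ h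
    rw [Finsupp.notMem_support_iff.mp h, Finsupp.notMem_support_iff.mp h2]

/-- Sorted list of the image of the support. -/
def tKey (σ : Equiv.Perm (Fin n)) (ν : Fin n →₀ ℕ) : List (Fin n) :=
  (ν.support.image σ).sort (· ≤ ·)

lemma tKey_length (σ : Equiv.Perm (Fin n)) (ν : Fin n →₀ ℕ) :
    (tKey σ ν).length = (sKey ν).length := by
  rw [tKey, sKey, Finset.length_sort, Finset.length_sort,
    Finset.card_image_of_injective _ σ.injective]

lemma hivertExp_apply (σ : Equiv.Perm (Fin n)) (ν : Fin n →₀ ℕ) (j : Fin n) :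
    hivertExp σ ν j = ((sKey ν).map ν).getD ((tKey σ ν).idxOf j) 0 := by
  rw [hivertExp, Finsupp.equivFunOnFinite_symm_apply_apply]; rfl

lemma hivertExp_of_not_mem {σ : Equiv.Perm (Fin n)} {ν : Fin n →₀ ℕ} {j : Fin n}
    (h : j ∉ tKey σ ν) : hivertExp σ ν j = 0 := by
  rw [hivertExp_apply, List.getD_eq_default]
  rw [List.idxOf_eq_length_iff.mpr h, List.length_map, ← tKey_length σ ν]

lemma hivertExp_get {σ : Equiv.Perm (Fin n)} {ν : Fin n →₀ ℕ} (k : ℕ)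
    (hk : k < (tKey σ ν).length) :
    hivertExp σ ν ((tKey σ ν).get ⟨k, hk⟩) =
      ((sKey ν).map ν).get ⟨k, by rw [List.length_map, ← tKey_length σ ν]; exact hk⟩ := by
  have hnd : (tKey σ ν).Nodup := Finset.sort_nodup _ _
  rw [hivertExp_apply, List.get_idxOf hnd ⟨k, hk⟩,
    List.getD_eq_getElem _ _ (by rw [List.length_map, ← tKey_length σ ν]; exact hk)]
  rfl

lemma support_hivertExp (σ : Equiv.Perm (Fin n)) (ν : Fin n →₀ ℕ) :
    (hivertExp σ ν).support = ν.support.image σ := by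
  ext j
  rw [Finsupp.mem_support_iff]
  constructor
  · intro hj
    by_contra hmem
    exact hj (hivertExp_of_not_mem (by rw [tKey, Finset.mem_sort]; exact hmem))
  · intro hj
    have hmem : j ∈ tKey σ ν := by rw [tKey, Finset.mem_sort]; exact hj
    have hk : (tKey σ ν).idxOf j < (tKey σ ν).length := List.idxOf_lt_length_iff.mpr hmem
    have hjeq : (tKey σ ν).get ⟨_, hk⟩ = j := List.idxOf_get hk
    rw [← hjeq, hivertExp_get _ hk, List.get_eq_getElem, List.getElem_map]
    apply mem_sKey.mp
    exact List.get_mem _ _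

lemma sKey_hivertExp (σ : Equiv.Perm (Fin n)) (ν : Fin n →₀ ℕ) :
    sKey (hivertExp σ ν) = tKey σ ν := by
  rw [sKey, support_hivertExp]; rfl

lemma map_hivertExp (σ : Equiv.Perm (Fin n)) (ν : Fin n →₀ ℕ) :
    (sKey (hivertExp σ ν)).map (hivertExp σ ν) = (sKey ν).map ν := by
  rw [sKey_hivertExp]
  apply List.ext_get
  · rw [List.length_map, List.length_map, tKey_length]
  intro k h1 h2
  rw [List.get_eq_getElem, List.getElem_map]
  exact hivertExp_get k (by rw [List.length_map] at h1; exact h1)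

lemma qcomp_hivertExp (σ : Equiv.Perm (Fin n)) (ν : Fin n →₀ ℕ) :
    qcomp (hivertExp σ ν) = qcomp ν := by
  rw [qcomp_eq_map, qcomp_eq_map, map_hivertExp]

lemma hivertExp_eq_of {σ : Equiv.Perm (Fin n)} {ν μ : Fin n →₀ ℕ}
    (h1 : μ.support = ν.support.image σ) (h2 : (sKey μ).map μ = (sKey ν).map ν) :
    hivertExp σ ν = μ :=
  finsupp_ext ((support_hivertExp σ ν).trans h1.symm) ((map_hivertExp σ ν).trans h2.symm)

lemma hivertExp_inv (σ : Equiv.Perm (Fin n)) (ν : Fin n →₀ ℕ) :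
    hivertExp σ⁻¹ (hivertExp σ ν) = ν := by
  apply hivertExp_eq_of
  · rw [support_hivertExp, Finset.image_image]
    ext i; simp
  · exact (map_hivertExp σ ν).symm

lemma hivertExp_injective (σ : Equiv.Perm (Fin n)) : Function.Injective (hivertExp σ) :=
  Function.LeftInverse.injective (hivertExp_inv σ)

lemma coeff_hivertAct (σ : Equiv.Perm (Fin n)) (P : MvPolynomial (Fin n) ℂ) (μ : Fin n →₀ ℕ) :
    (hivertAct σ P).coeff μ = P.coeff (hivertExp σ⁻¹ μ) := by
  rw [hivertAct, Finsupp.sum, coeff_sum]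
  have key : ∀ ν : Fin n →₀ ℕ, hivertExp σ ν = μ ↔ ν = hivertExp σ⁻¹ μ := by
    intro ν
    constructor
    · intro h; rw [← h, hivertExp_inv]
    · intro h; subst h
      have := hivertExp_inv σ⁻¹ μ
      rwa [inv_inv] at this
  calc (∑ ν ∈ P.support, MvPolynomial.coeff μ ((monomial (hivertExp σ ν)) (P.coeff ν)))
      = ∑ ν ∈ P.support, if ν = hivertExp σ⁻¹ μ then P.coeff ν else 0 := by
        refine Finset.sum_congr rfl fun ν _ => ?_
        rw [coeff_monomial]
        exact if_congr (key ν) rfl rfl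
    _ = _ := by
        rw [Finset.sum_ite_eq']
        split
        · rfl
        · next h => exact (MvPolynomial.notMem_support_iff.mp h).symm

/-- Given two finsets of equal cardinality, there is a permutation carrying one onto the
other which is strictly monotone on the first. -/
lemma exists_mono_perm (S T : Finset (Fin n)) (hc : S.card = T.card) :
    ∃ σ : Equiv.Perm (Fin n), S.image σ = T ∧
      ∀ x ∈ S, ∀ y ∈ S, x < y → σ x < σ y := by
  classical
  let e : {x // x ∈ S} ≃o {x // x ∈ T} :=
    (S.orderIsoOfFin rfl).symm.trans (T.orderIsoOfFin hc.symm)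
  let e' : {x // ¬ x ∈ S} ≃ {x // ¬ x ∈ T} :=
    (Equiv.subtypeEquivRight (fun x => (Finset.mem_compl (s := S)).symm)).trans <|
      (Finset.equivOfCardEq (s := Sᶜ) (t := Tᶜ)
        (by rw [Finset.card_compl, Finset.card_compl, hc])).trans
      (Equiv.subtypeEquivRight (fun x => Finset.mem_compl (s := T)))
  refine ⟨Equiv.subtypeCongr e.toEquiv e', ?_, ?_⟩
  · have happ : ∀ x (hx : x ∈ S), Equiv.subtypeCongr e.toEquiv e' x = e ⟨x, hx⟩ := by
      intro x hx
      simp [Equiv.subtypeCongr, hx]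
    ext j
    simp only [Finset.mem_image]
    constructor
    · rintro ⟨i, hi, rfl⟩
      rw [happ i hi]
      exact (e ⟨i, hi⟩).2
    · intro hj
      refine ⟨e.symm ⟨j, hj⟩, (e.symm ⟨j, hj⟩).2, ?_⟩
      rw [happ _ (e.symm ⟨j, hj⟩).2]
      simp
  · intro x hx y hy hxy
    have happ : ∀ x (hx : x ∈ S), Equiv.subtypeCongr e.toEquiv e' x = e ⟨x, hx⟩ := by
      intro x hx
      simp [Equiv.subtypeCongr, hx]
    rw [happ x hx, happ y hy]
    exact e.strictMono (by exact hxy)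

lemma card_eq_of_qcomp {ν μ : Fin n →₀ ℕ} (h : qcomp ν = qcomp μ) :
    ν.support.card = μ.support.card := by
  have := congrArg List.length h
  rwa [qcomp_eq_map, qcomp_eq_map, List.length_map, List.length_map, sKey, sKey,
    Finset.length_sort, Finset.length_sort] at this

lemma exists_hivert_perm {ν μ : Fin n →₀ ℕ} (h : qcomp ν = qcomp μ) :
    ∃ σ : Equiv.Perm (Fin n), hivertExp σ ν = μ := by
  obtain ⟨σ, himg, -⟩ := exists_mono_perm ν.support μ.support (card_eq_of_qcomp h)
  refine ⟨σ, hivertExp_eq_of himg.symm ?_⟩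
  rw [qcomp_eq_map, qcomp_eq_map] at h
  exact h.symm

/-- support of `equivMapDomain`. -/
lemma support_equivMapDomain (σ : Equiv.Perm (Fin n)) (α : Fin n →₀ ℕ) :
    (Finsupp.equivMapDomain σ α).support = α.support.image σ := by
  ext j
  simp only [Finsupp.mem_support_iff, Finsupp.equivMapDomain_apply, Finset.mem_image]
  constructor
  · intro hj
    exact ⟨σ.symm j, hj, by simp⟩
  · rintro ⟨i, hi, rfl⟩
    simpa using hi

lemma qcomp_equivMapDomain {σ : Equiv.Perm (Fin n)} {ν α : Fin n →₀ ℕ}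
    (hsub : α.support ⊆ ν.support)
    (hmono : ∀ x ∈ ν.support, ∀ y ∈ ν.support, x < y → σ x < σ y) :
    qcomp (Finsupp.equivMapDomain σ α) = qcomp α := by
  have hkey : sKey (Finsupp.equivMapDomain σ α) = (sKey α).map σ := by
    rw [sKey, support_equivMapDomain]
    refine (List.eq_of_perm_of_sorted
      (List.perm_of_nodup_nodup_toFinset_eq (Finset.sort_nodup _ _)
        ((sKey_nodup α).map σ.injective) ?_)
      (Finset.sort_sorted_lt _) ?_)
    · ext j
      simp only [List.mem_toFinset, Finset.mem_sort, Finset.mem_image, List.mem_map]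
      constructor
      · rintro ⟨i, hi, rfl⟩
        exact ⟨i, mem_sKey.mpr (Finsupp.mem_support_iff.mp hi), rfl⟩
      · rintro ⟨i, hi, rfl⟩
        exact ⟨i, Finsupp.mem_support_iff.mpr (mem_sKey.mp hi), rfl⟩
    · rw [List.pairwise_map]
      refine List.Pairwise.imp_of_mem ?_ (sKey_sorted α)
      intro a b ha hb hab
      exact hmono a (hsub (Finsupp.mem_support_iff.mpr (mem_sKey.mp ha)))
        b (hsub (Finsupp.mem_support_iff.mpr (mem_sKey.mp hb))) hab
  rw [qcomp_eq_map, qcomp_eq_map, hkey, List.map_map]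
  exact List.map_inj_left.mpr fun i _ => by simp [Finsupp.equivMapDomain_apply]

lemma equivMapDomain_eq_of {σ : Equiv.Perm (Fin n)} {ν μ : Fin n →₀ ℕ}
    (himg : ν.support.image σ = μ.support)
    (hmono : ∀ x ∈ ν.support, ∀ y ∈ ν.support, x < y → σ x < σ y)
    (h : qcomp ν = qcomp μ) : Finsupp.equivMapDomain σ ν = μ := by
  have hsupp : (Finsupp.equivMapDomain σ ν).support = μ.support := by
    rw [support_equivMapDomain, himg]
  apply finsupp_ext hsupp
  have hq : qcomp (Finsupp.equivMapDomain σ ν) = qcomp μ :=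
    (qcomp_equivMapDomain subset_rfl hmono).trans h
  rwa [qcomp_eq_map, qcomp_eq_map] at hq

lemma equivMapDomain_add (σ : Equiv.Perm (Fin n)) (α β : Fin n →₀ ℕ) :
    Finsupp.equivMapDomain σ (α + β) =
      Finsupp.equivMapDomain σ α + Finsupp.equivMapDomain σ β := by
  ext j; simp [Finsupp.equivMapDomain_apply]

lemma equivMapDomain_symm_apply (σ : Equiv.Perm (Fin n)) (α : Fin n →₀ ℕ) :
    Finsupp.equivMapDomain σ.symm (Finsupp.equivMapDomain σ α) = α := by
  ext j; simp [Finsupp.equivMapDomain_apply]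

lemma equivMapDomain_apply_symm (σ : Equiv.Perm (Fin n)) (α : Fin n →₀ ℕ) :
    Finsupp.equivMapDomain σ (Finsupp.equivMapDomain σ.symm α) = α := by
  ext j; simp [Finsupp.equivMapDomain_apply]

lemma mul_quasiSym {P Q : MvPolynomial (Fin n) ℂ} (hP : IsQuasiSym P) (hQ : IsQuasiSym Q) :
    IsQuasiSym (P * Q) := by
  intro ν μ h
  obtain ⟨σ, himg, hmono⟩ := exists_mono_perm ν.support μ.support (card_eq_of_qcomp h)
  have hν : Finsupp.equivMapDomain σ ν = μ := equivMapDomain_eq_of himg hmono h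
  have hmono' : ∀ x ∈ μ.support, ∀ y ∈ μ.support, x < y → σ.symm x < σ.symm y := by
    intro x hx y hy hxy
    rcases lt_trichotomy (σ.symm x) (σ.symm y) with h1 | h1 | h1
    · exact h1
    · exact absurd (by rw [← σ.apply_symm_apply x, ← σ.apply_symm_apply y, h1]) hxy.ne
    · have hx' : σ.symm x ∈ ν.support := by
        rw [← himg] at hx
        obtain ⟨i, hi, rfl⟩ := Finset.mem_image.mp hx
        simpa using hi
      have hy' : σ.symm y ∈ ν.support := by
        rw [← himg] at hy
        obtain ⟨i, hi, rfl⟩ := Finset.mem_image.mp hy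
        simpa using hi
      have := hmono _ hy' _ hx' h1
      rw [σ.apply_symm_apply, σ.apply_symm_apply] at this
      exact absurd hxy (not_lt.mpr this.le)
  have hsub : ∀ {α β : Fin n →₀ ℕ}, α + β = ν → α.support ⊆ ν.support := by
    intro α β hab i hi
    rw [Finsupp.mem_support_iff] at hi ⊢
    rw [← hab]
    simp only [Finsupp.add_apply]
    omega
  rw [MvPolynomial.coeff_mul, MvPolynomial.coeff_mul]
  refine Finset.sum_nbij'
    (fun p => (Finsupp.equivMapDomain σ p.1, Finsupp.equivMapDomain σ p.2))
    (fun p => (Finsupp.equivMapDomain σ.symm p.1, Finsupp.equivMapDomain σ.symm p.2))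
    ?_ ?_ ?_ ?_ ?_
  · intro p hp
    rw [Finset.HasAntidiagonal.mem_antidiagonal] at hp ⊢
    rw [← equivMapDomain_add, hp, hν]
  · intro p hp
    rw [Finset.HasAntidiagonal.mem_antidiagonal] at hp ⊢
    rw [← equivMapDomain_add, hp, ← hν, equivMapDomain_symm_apply]
  · intro p _
    simp [equivMapDomain_symm_apply]
  · intro p _
    simp [equivMapDomain_apply_symm]
  · intro p hp
    rw [Finset.HasAntidiagonal.mem_antidiagonal] at hp
    have h1 := qcomp_equivMapDomain (σ := σ) (hsub hp) hmono
    have h2 := qcomp_equivMapDomain (σ := σ)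
      (hsub (by rw [add_comm] at hp; exact hp)) hmono
    rw [hP p.1 _ h1.symm, hQ p.2 _ h2.symm]

end QSaux

open QSaux in
/-- `P` is quasi-symmetric iff it is invariant under Hivert's
quasi-symmetrizing action of `Sₙ`; moreover the quasi-symmetric polynomials in `n`
variables form a subring of `ℂ[x₁,…,xₙ]`. -/
theorem quasiSym_iff_hivert_invariant (n : ℕ) :
    (∀ P : MvPolynomial (Fin n) ℂ,
      IsQuasiSym P ↔ ∀ σ : Equiv.Perm (Fin n), hivertAct σ P = P) ∧
    ∃ R : Subring (MvPolynomial (Fin n) ℂ),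
      (R : Set (MvPolynomial (Fin n) ℂ)) = {P | IsQuasiSym P} := by
  constructor
  · intro P
    constructor
    · intro hq σ
      apply MvPolynomial.ext
      intro μ
      rw [coeff_hivertAct]
      exact hq _ _ (qcomp_hivertExp σ⁻¹ μ)
    · intro hI ν μ h
      obtain ⟨σ, hσ⟩ := exists_hivert_perm h
      have : P.coeff μ = P.coeff ν := by
        conv_lhs => rw [← hI σ]
        rw [coeff_hivertAct, ← hσ, hivertExp_inv]
      exact this.symm
  · refine ⟨{
      carrier := {P | IsQuasiSym P}
      zero_mem' := by intro ν μ _; simp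
      one_mem' := by
        intro ν μ h
        rw [MvPolynomial.coeff_one, MvPolynomial.coeff_one]
        have : ν = 0 ↔ μ = 0 := by
          rw [← qcomp_eq_nil, ← qcomp_eq_nil, h]
        by_cases hν : ν = 0
        · rw [if_pos hν.symm, if_pos (this.mp hν).symm]
        · rw [if_neg fun hh => hν hh.symm, if_neg fun hh => hν (this.mpr hh.symm)]
      add_mem' := by
        intro P Q hP hQ ν μ h
        rw [MvPolynomial.coeff_add, MvPolynomial.coeff_add, hP ν μ h, hQ ν μ h]
      neg_mem' := by
        intro P hP ν μ h
        rw [MvPolynomial.coeff_neg, MvPolynomial.coeff_neg, hP ν μ h]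
      mul_mem' := fun hP hQ => mul_quasiSym hP hQ
    }, rfl⟩
end

section
/- A polynomial P ∈ C[x_1,...,x_n] is quasi-invariant for the quasi-symmetrizing action of G_{n,m} if and only if there exists a quasi-symmetric polynomial Q in n variables such that P(x_1,...,x_n) = Q(x_1^m,...,x_n^m). -/
open MvPolynomial Complex

open scoped Classical in
/-- The quasi-symmetrizing action of the element `g = (σ, w)` of `G_{n,m}` on a
polynomial: on a monomial `x^ν` it acts by Hivert's action of `σ` on the exponents,
multiplied by the weight `w(g) = ∏ᵢ ζ^{wᵢ}` (`ζ = e^{2πi/m}`) raised to the power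
`c(ν)`, where `c(ν) = 0` if all exponents of `ν` are divisible by `m` and `1`
otherwise. -/
noncomputable def qAct {n : ℕ} (m : ℕ) (σ : Equiv.Perm (Fin n)) (w : Fin n → ZMod m)
    (P : MvPolynomial (Fin n) ℂ) : MvPolynomial (Fin n) ℂ :=
  (AddMonoidAlgebra.coeff P).sum fun ν c =>
    monomial (hivertExp σ ν)
      ((if ∀ i, m ∣ ν i then 1
        else ∏ i, Complex.exp (2 * Real.pi * I / m) ^ (w i).val) * c)

lemma hivertExp_apply {n : ℕ} (σ : Equiv.Perm (Fin n)) (ν : Fin n →₀ ℕ) (j : Fin n) :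
    hivertExp σ ν j = ((ν.support.sort (· ≤ ·)).map ν).getD
      (((ν.support.image σ).sort (· ≤ ·)).idxOf j) 0 := by
  simp [hivertExp]

-- getD/indexOf lemma
lemma getD_map_indexOf {α β : Type*} [DecidableEq α] [Inhabited β] (M : List α) (f : α → β)
    (d : β) (j : α) :
    (M.map f).getD (M.idxOf j) d = if j ∈ M then f j else d := by
  by_cases h : j ∈ M
  · rw [if_pos h]
    have hlt : M.idxOf j < M.length := List.idxOf_lt_length_iff.2 h
    rw [List.getD_eq_getElem (M.map f) d (by simpa using hlt)]
    simp [List.getElem_idxOf hlt]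
  · rw [if_neg h, List.getD_eq_default]
    simp [List.idxOf_eq_length h]

lemma qcomp_eq_map_sort {n : ℕ} (ν : Fin n →₀ ℕ) :
    qcomp ν = (ν.support.sort (· ≤ ·)).map ν := by
  have h1 : (List.ofFn fun i => ν i).filter (· ≠ 0)
      = ((List.finRange n).filter (fun i => ν i ≠ 0)).map ν := by
    rw [List.ofFn_eq_map, List.filter_map]
    rfl
  have h2 : (List.finRange n).filter (fun i => ν i ≠ 0) = ν.support.sort (· ≤ ·) := by
    refine (fun hp h1 h2 => List.Perm.eq_of_pairwise' (r := (· ≤ ·)) h1 h2 hp) ?_ ?_ ?_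
    · rw [List.perm_ext_iff_of_nodup (List.Nodup.filter _ (List.nodup_finRange n))
        (ν.support.sort_nodup (· ≤ ·))]
      intro a
      simp [Finsupp.mem_support_iff]
    · exact List.Pairwise.filter _ (List.sortedLT_finRange n).sortedLE.pairwise
    · exact ν.support.pairwise_sort (· ≤ ·)
  rw [qcomp, h1, h2]

lemma hivertExp_eq_of {n : ℕ} (σ : Equiv.Perm (Fin n)) (ν μ : Fin n →₀ ℕ)
    (himg : ν.support.image σ = μ.support) (hq : qcomp ν = qcomp μ) :
    hivertExp σ ν = μ := by
  ext j
  rw [hivertExp_apply, himg, ← qcomp_eq_map_sort, hq, qcomp_eq_map_sort,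
    getD_map_indexOf]
  split_ifs with h
  · rfl
  · rw [Finset.mem_sort] at h
    simp only [Finsupp.mem_support_iff, not_not] at h; exact h.symm

lemma hivertExp_one {n : ℕ} (ν : Fin n →₀ ℕ) : hivertExp 1 ν = ν := by
  apply hivertExp_eq_of
  · simp
  · rfl

lemma length_sort_image {n : ℕ} (σ : Equiv.Perm (Fin n)) (ν : Fin n →₀ ℕ) :
    ((ν.support.image σ).sort (· ≤ ·)).length = (ν.support.sort (· ≤ ·)).length := by
  rw [Finset.length_sort, Finset.length_sort, Finset.card_image_of_injective _ σ.injective]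

lemma support_hivertExp {n : ℕ} (σ : Equiv.Perm (Fin n)) (ν : Fin n →₀ ℕ) :
    (hivertExp σ ν).support = ν.support.image σ := by
  ext j
  rw [Finsupp.mem_support_iff, hivertExp_apply]
  by_cases h : j ∈ ν.support.image σ
  · have hm : j ∈ (ν.support.image σ).sort (· ≤ ·) := (Finset.mem_sort _).2 h
    have hlt : ((ν.support.image σ).sort (· ≤ ·)).idxOf j
        < ((ν.support.sort (· ≤ ·)).map ν).length := by
      rw [List.length_map, ← length_sort_image σ ν]
      exact List.idxOf_lt_length_iff.2 hm
    rw [List.getD_eq_getElem _ _ hlt]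
    simp only [List.getElem_map, h, iff_true]
    have hlt' : ((ν.support.image σ).sort (· ≤ ·)).idxOf j
        < (ν.support.sort (· ≤ ·)).length := by simpa using hlt
    have : (ν.support.sort (· ≤ ·))[((ν.support.image σ).sort (· ≤ ·)).idxOf j]'hlt' ∈
        ν.support := by
      rw [← Finset.mem_sort (· ≤ ·)]
      exact List.getElem_mem _
    exact Finsupp.mem_support_iff.1 this
  · have : j ∉ (ν.support.image σ).sort (· ≤ ·) := fun hc => h ((Finset.mem_sort _).1 hc)
    rw [List.idxOf_eq_length this, List.getD_eq_default]
    · simp [h]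
    · rw [List.length_map, length_sort_image]

lemma qcomp_hivertExp {n : ℕ} (σ : Equiv.Perm (Fin n)) (ν : Fin n →₀ ℕ) :
    qcomp (hivertExp σ ν) = qcomp ν := by
  rw [qcomp_eq_map_sort, qcomp_eq_map_sort, support_hivertExp]
  apply List.ext_getElem
  · rw [List.length_map, List.length_map, length_sort_image]
  · intro i h1 h2
    simp only [List.getElem_map]
    rw [hivertExp_apply]
    rw [((ν.support.image σ).sort_nodup (· ≤ ·)).idxOf_getElem]
    rw [List.getD_eq_getElem _ _ (by simpa using h2), List.getElem_map]

lemma hivertExp_inv_hivertExp {n : ℕ} (σ : Equiv.Perm (Fin n)) (ν : Fin n →₀ ℕ) :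
    hivertExp σ⁻¹ (hivertExp σ ν) = ν := by
  apply hivertExp_eq_of
  · rw [support_hivertExp, Finset.image_image]
    have : (⇑σ⁻¹ ∘ ⇑σ) = id := by ext x; simp
    rw [this, Finset.image_id]
  · exact qcomp_hivertExp _ _

lemma hivertExp_injective {n : ℕ} (σ : Equiv.Perm (Fin n)) :
    Function.Injective (hivertExp σ (n := n)) := by
  intro a b h
  rw [← hivertExp_inv_hivertExp σ a, h, hivertExp_inv_hivertExp]

open scoped Classical in
lemma coeff_qAct {n m : ℕ} (σ : Equiv.Perm (Fin n)) (w : Fin n → ZMod m)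
    (P : MvPolynomial (Fin n) ℂ) (ν : Fin n →₀ ℕ) :
    (qAct m σ w P).coeff (hivertExp σ ν) =
      (if ∀ i, m ∣ ν i then 1
        else ∏ i, Complex.exp (2 * Real.pi * I / m) ^ (w i).val) * P.coeff ν := by
  rw [qAct, MvPolynomial.sum_def, MvPolynomial.coeff_sum]
  simp only [coeff_monomial, (hivertExp_injective σ).eq_iff]
  rw [Finset.sum_eq_single ν (fun b _ hb => if_neg hb) (fun hb => ?_)]
  · rw [if_pos rfl]
  · rw [if_pos rfl]
    rw [MvPolynomial.notMem_support_iff.1 hb, mul_zero]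

lemma mem_qcomp {n : ℕ} {ν : Fin n →₀ ℕ} {x : ℕ} :
    x ∈ qcomp ν ↔ x ≠ 0 ∧ ∃ i, ν i = x := by
  simp [qcomp, List.mem_filter, List.mem_ofFn, and_comm]

lemma dvd_iff_qcomp {n m : ℕ} (ν : Fin n →₀ ℕ) :
    (∀ i, m ∣ ν i) ↔ ∀ x ∈ qcomp ν, m ∣ x := by
  constructor
  · rintro h x hx
    obtain ⟨-, i, rfl⟩ := mem_qcomp.1 hx
    exact h i
  · intro h i
    by_cases h0 : ν i = 0
    · simp [h0]
    · exact h _ (mem_qcomp.2 ⟨h0, i, rfl⟩)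

lemma smul_apply' {n : ℕ} (m : ℕ) (ν : Fin n →₀ ℕ) (i : Fin n) : (m • ν) i = m * ν i := by
  simp

lemma qcomp_smul {n m : ℕ} (hm : 0 < m) (ν : Fin n →₀ ℕ) :
    qcomp (m • ν) = (qcomp ν).map (m * ·) := by
  unfold qcomp
  have h1 : (List.ofFn fun i => (m • ν) i) = (List.ofFn fun i => ν i).map (m * ·) := by
    rw [List.map_ofFn]
    congr 1
  rw [h1, List.filter_map, List.filter_congr]
  intro x _
  simp [Nat.mul_ne_zero_iff, hm.ne']

noncomputable def divExp {n : ℕ} (m : ℕ) (ν : Fin n →₀ ℕ) : Fin n →₀ ℕ :=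
  Finsupp.equivFunOnFinite.symm fun i => ν i / m

lemma divExp_apply {n : ℕ} (m : ℕ) (ν : Fin n →₀ ℕ) (i : Fin n) : divExp m ν i = ν i / m := by
  simp [divExp]

lemma smul_divExp {n m : ℕ} (ν : Fin n →₀ ℕ) (h : ∀ i, m ∣ ν i) :
    m • divExp m ν = ν := by
  ext i
  rw [smul_apply', divExp_apply, Nat.mul_div_cancel' (h i)]

lemma divExp_smul {n m : ℕ} (hm : 0 < m) (ν : Fin n →₀ ℕ) : divExp m (m • ν) = ν := by
  ext i
  rw [divExp_apply, smul_apply', Nat.mul_div_cancel_left _ hm]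

lemma qcomp_divExp {n m : ℕ} (hm : 0 < m) (ν : Fin n →₀ ℕ) (h : ∀ i, m ∣ ν i) :
    qcomp (divExp m ν) = (qcomp ν).map (· / m) := by
  unfold qcomp
  have h1 : (List.ofFn fun i => divExp m ν i) = (List.ofFn fun i => ν i).map (· / m) := by
    rw [List.map_ofFn]
    congr 1
  rw [h1, List.filter_map, List.filter_congr]
  intro x hx
  obtain ⟨i, rfl⟩ := Set.mem_range.1 ((List.mem_ofFn' _ _).1 hx)
  obtain ⟨k, hk⟩ := h i
  simp only [hk, Function.comp, Nat.mul_div_cancel_left _ hm]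
  simp [Nat.mul_ne_zero_iff, hm.ne']

lemma card_support_eq_length_qcomp {n : ℕ} (ν : Fin n →₀ ℕ) :
    ν.support.card = (qcomp ν).length := by
  rw [qcomp_eq_map_sort, List.length_map, Finset.length_sort]

open scoped Classical in
lemma exists_perm_image {n : ℕ} (s t : Finset (Fin n)) (h : s.card = t.card) :
    ∃ σ : Equiv.Perm (Fin n), s.image σ = t := by
  have hc : sᶜ.card = tᶜ.card := by
    rw [Finset.card_compl, Finset.card_compl, h]
  let e : {x // x ∈ s} ≃ {x // x ∈ t} := Finset.equivOfCardEq h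
  let f : {x // ¬ x ∈ s} ≃ {x // ¬ x ∈ t} :=
    ((Equiv.subtypeEquivRight (fun x => (Finset.mem_compl).symm)).trans
      (Finset.equivOfCardEq hc)).trans
      (Equiv.subtypeEquivRight (fun x => Finset.mem_compl))
  refine ⟨Equiv.subtypeCongr e f, ?_⟩
  apply Finset.eq_of_subset_of_card_le
  · intro b hb
    rw [Finset.mem_image] at hb
    obtain ⟨a, ha, rfl⟩ := hb
    have : Equiv.subtypeCongr e f a = ↑(e ⟨a, ha⟩) := by
      simp [Equiv.subtypeCongr, ha]
    rw [this]
    exact (e ⟨a, ha⟩).2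
  · rw [Finset.card_image_of_injective _ (Equiv.subtypeCongr e f).injective, h]

lemma support_smul_exp {n m : ℕ} (hm : 0 < m) (ν : Fin n →₀ ℕ) :
    (m • ν).support = ν.support := by
  ext i
  simp [Finsupp.mem_support_iff, Nat.mul_ne_zero_iff, hm.ne']

lemma bind₁_monomial_pow {n m : ℕ} (hm : 0 < m) (τ : Fin n →₀ ℕ) (c : ℂ) :
    bind₁ (fun i => (X i : MvPolynomial (Fin n) ℂ) ^ m) (monomial τ c)
      = monomial (m • τ) c := by
  rw [MvPolynomial.bind₁_monomial, MvPolynomial.monomial_eq, Finsupp.prod_of_support_subset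
    (m • τ) (Finset.subset_of_eq (support_smul_exp hm τ)) (fun i e => (X i : MvPolynomial (Fin n) ℂ) ^ e)
    (fun i _ => pow_zero _)]
  congr 1
  apply Finset.prod_congr rfl
  intro i _
  rw [smul_apply', ← pow_mul]

open scoped Classical in
lemma coeff_bind₁_pow {n m : ℕ} (hm : 0 < m) (Q : MvPolynomial (Fin n) ℂ)
    (ν : Fin n →₀ ℕ) :
    (bind₁ (fun i => (X i : MvPolynomial (Fin n) ℂ) ^ m) Q).coeff ν
      = if ∀ i, m ∣ ν i then Q.coeff (divExp m ν) else 0 := by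
  conv_lhs => rw [Q.as_sum]
  rw [map_sum, MvPolynomial.coeff_sum]
  have hterm : ∀ τ ∈ Q.support,
      (bind₁ (fun i => (X i : MvPolynomial (Fin n) ℂ) ^ m) (monomial τ (Q.coeff τ))).coeff ν
        = if m • τ = ν then Q.coeff τ else 0 := by
    intro τ _
    rw [bind₁_monomial_pow hm, coeff_monomial]
  rw [Finset.sum_congr rfl hterm]
  by_cases hdvd : ∀ i, m ∣ ν i
  · rw [if_pos hdvd]
    have hcond : ∀ τ : Fin n →₀ ℕ, m • τ = ν ↔ τ = divExp m ν := by
      intro τ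
      constructor
      · rintro rfl
        rw [divExp_smul hm]
      · rintro rfl
        exact smul_divExp ν hdvd
    have : ∀ τ ∈ Q.support, (if m • τ = ν then Q.coeff τ else 0)
        = if τ = divExp m ν then Q.coeff τ else 0 := by
      intro τ _
      simp only [hcond τ]
    rw [Finset.sum_congr rfl this,
      Finset.sum_eq_single (divExp m ν) (fun b _ hb => if_neg hb) (fun hb => ?_), if_pos rfl]
    rw [if_pos rfl, MvPolynomial.notMem_support_iff.1 hb]
  · rw [if_neg hdvd, Finset.sum_eq_zero]
    intro τ _
    rw [if_neg]
    rintro rfl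
    exact hdvd fun i => ⟨τ i, (smul_apply' m τ i)⟩

lemma exp_ne_one {m : ℕ} (hm2 : 2 ≤ m) : Complex.exp (2 * Real.pi * I / m) ≠ 1 := by
  intro h
  obtain ⟨k, hk⟩ := Complex.exp_eq_one_iff.1 h
  have h2pi : (2 * Real.pi * I : ℂ) ≠ 0 := by
    simp [Real.pi_ne_zero, Complex.I_ne_zero]
  have hm0 : (m : ℂ) ≠ 0 := by
    exact_mod_cast (by omega : m ≠ 0)
  have : (1 : ℂ) = k * m := by
    field_simp at hk
    apply mul_left_cancel₀ h2pi
    rw [mul_one]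
    linear_combination (2 * Real.pi * I) * hk
  have : ((1 : ℤ) : ℂ) = ((k * m : ℤ) : ℂ) := by push_cast; exact this
  have h1 : (1 : ℤ) = k * m := by exact_mod_cast this
  have : (m : ℤ) ∣ 1 := Dvd.intro_left k h1.symm
  have := Int.le_of_dvd one_pos this
  omega

/-- `P` is quasi-invariant for the quasi-symmetrizing action of `G_{n,m}`
iff `P(X) = Q(x₁^m,…,xₙ^m)` for some quasi-symmetric polynomial `Q`. -/
theorem quasiInvariant_iff (n m : ℕ) (hn : 0 < n) (hm : 0 < m)
    (P : MvPolynomial (Fin n) ℂ) :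
    (∀ (σ : Equiv.Perm (Fin n)) (w : Fin n → ZMod m), qAct m σ w P = P) ↔
      ∃ Q : MvPolynomial (Fin n) ℂ, IsQuasiSym Q ∧
        P = MvPolynomial.bind₁ (fun i => (X i : MvPolynomial (Fin n) ℂ) ^ m) Q := by
  classical
  constructor
  · intro hP
    -- Step 1: every exponent in the support of P is divisible by m
    have hdvd : ∀ ν : Fin n →₀ ℕ, P.coeff ν ≠ 0 → ∀ i, m ∣ ν i := by
      intro ν hν
      by_contra hnd
      have hm2 : 2 ≤ m := by
        by_contra h
        have h1 : m = 1 := by omega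
        exact hnd fun i => h1 ▸ one_dvd _
      haveI : Fact (1 < m) := ⟨hm2⟩
      set w : Fin n → ZMod m := fun i => if i = (⟨0, hn⟩ : Fin n) then 1 else 0 with hw
      have hkey := coeff_qAct (σ := 1) w P ν
      rw [hP 1 w, hivertExp_one, if_neg hnd] at hkey
      have hprod : (∏ i, Complex.exp (2 * Real.pi * I / m) ^ (w i).val)
          = Complex.exp (2 * Real.pi * I / m) := by
        rw [Finset.prod_pow_eq_pow_sum]
        have hsum : (∑ i, (w i).val) = 1 := by
          simp only [hw, apply_ite ZMod.val, ZMod.val_one m, ZMod.val_zero]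
          rw [Finset.sum_ite_eq' Finset.univ (⟨0, hn⟩ : Fin n) (fun _ => 1)]
          simp
        rw [hsum, pow_one]
      rw [hprod] at hkey
      have hone : Complex.exp (2 * Real.pi * I / m) = 1 := by
        have h1 : Complex.exp (2 * Real.pi * I / m) * P.coeff ν = 1 * P.coeff ν := by
          rw [one_mul, ← hkey]
        exact mul_right_cancel₀ hν h1
      exact exp_ne_one hm2 hone
    -- Step 2: the coefficients of P are quasi-symmetric
    have hqs : ∀ ν μ : Fin n →₀ ℕ, qcomp ν = qcomp μ → P.coeff ν = P.coeff μ := by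
      intro ν μ hq
      obtain ⟨σ, hσ⟩ := exists_perm_image ν.support μ.support
        (by rw [card_support_eq_length_qcomp, card_support_eq_length_qcomp, hq])
      have hEq := hivertExp_eq_of σ ν μ hσ hq
      have hkey := coeff_qAct σ (fun _ => (0 : ZMod m)) P ν
      rw [hP σ (fun _ => (0 : ZMod m)), hEq] at hkey
      split_ifs at hkey with h
      · rw [one_mul] at hkey
        exact hkey.symm
      · simp only [ZMod.val_zero, pow_zero, Finset.prod_const_one, one_mul] at hkey
        exact hkey.symm
    -- Construct Q
    have hPQ : bind₁ (fun i => (X i : MvPolynomial (Fin n) ℂ) ^ m)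
        ((AddMonoidAlgebra.coeff P).sum fun ν c => monomial (divExp m ν) c) = P := by
      rw [MvPolynomial.sum_def, map_sum]
      have hterm : ∀ ν ∈ P.support,
          bind₁ (fun i => (X i : MvPolynomial (Fin n) ℂ) ^ m)
            (monomial (divExp m ν) (P.coeff ν)) = monomial ν (P.coeff ν) := by
        intro ν hν
        rw [bind₁_monomial_pow hm,
          smul_divExp ν (hdvd ν (MvPolynomial.mem_support_iff.1 hν))]
      rw [Finset.sum_congr rfl hterm, MvPolynomial.support_sum_monomial_coeff]
    refine ⟨(AddMonoidAlgebra.coeff P).sum fun ν c => monomial (divExp m ν) c, ?_, hPQ.symm⟩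
    intro ν μ hq
    have hcoeff : ∀ τ : Fin n →₀ ℕ,
        ((AddMonoidAlgebra.coeff P).sum fun ν c => monomial (divExp m ν) c).coeff τ = P.coeff (m • τ) := by
      intro τ
      have h1 := coeff_bind₁_pow hm ((AddMonoidAlgebra.coeff P).sum fun ν c => monomial (divExp m ν) c) (m • τ)
      rw [hPQ, if_pos fun i => ⟨τ i, smul_apply' m τ i⟩, divExp_smul hm] at h1
      exact h1.symm
    rw [hcoeff, hcoeff]
    exact hqs _ _ (by rw [qcomp_smul hm, qcomp_smul hm, hq])
  · rintro ⟨Q, hQ, rfl⟩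
    intro σ w
    apply MvPolynomial.ext
    intro μ
    set P := bind₁ (fun i => (X i : MvPolynomial (Fin n) ℂ) ^ m) Q with hPdef
    set ν₀ := hivertExp σ⁻¹ μ with hν₀
    have hμ : hivertExp σ ν₀ = μ := by
      have h := hivertExp_inv_hivertExp σ⁻¹ μ
      rwa [inv_inv] at h
    have hqcomp : qcomp ν₀ = qcomp μ := by
      conv_rhs => rw [← hμ]
      exact (qcomp_hivertExp σ ν₀).symm
    have hLHS : (qAct m σ w P).coeff μ =
        (if ∀ i, m ∣ ν₀ i then 1
          else ∏ i, Complex.exp (2 * Real.pi * I / m) ^ (w i).val) * P.coeff ν₀ := by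
      conv_lhs => rw [← hμ]
      exact coeff_qAct σ w P ν₀
    rw [hLHS]
    by_cases hcase : ∀ i, m ∣ μ i
    · have hd0 : ∀ i, m ∣ ν₀ i :=
        (dvd_iff_qcomp ν₀).2 (by rw [hqcomp]; exact (dvd_iff_qcomp μ).1 hcase)
      rw [if_pos hd0, one_mul, hPdef, coeff_bind₁_pow hm, coeff_bind₁_pow hm,
        if_pos hd0, if_pos hcase]
      exact hQ _ _ (by rw [qcomp_divExp hm _ hd0, qcomp_divExp hm _ hcase, hqcomp])
    · have hd0 : ¬ ∀ i, m ∣ ν₀ i := fun h =>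
        hcase ((dvd_iff_qcomp μ).2 (by rw [← hqcomp]; exact (dvd_iff_qcomp ν₀).1 h))
      rw [hPdef, coeff_bind₁_pow hm, coeff_bind₁_pow hm, if_neg hd0, if_neg hd0, if_neg hcase, mul_zero]
end

section
/- Let S be a set of polynomials in C[x_1,...,x_n], m a positive integer, and S^m = {P(x_1^m,...,x_n^m) : P ∈ S}. If G is the reduced Gröbner basis of the ideal generated by S (with respect to the lexicographic order), then G^m = {g(x_1^m,...,x_n^m) : g ∈ G} is a Gröbner basis of the ideal generated by S^m. -/
open MvPolynomial

/-- The leading monomial of a polynomial with respect to the lexicographic order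
(`x^ν > x^μ` iff the first nonzero entry of `ν - μ` is positive); by convention
`LM 0 = 0`. -/
noncomputable def lm {n : ℕ} (P : MvPolynomial (Fin n) ℂ) : Fin n →₀ ℕ :=
  ofLex (WithBot.unbotD 0 (P.support.image (toLex : (Fin n →₀ ℕ) → Lex (Fin n →₀ ℕ))).max)

/-- `G` is a Gröbner basis of the ideal `I` (w.r.t. lex): `G ⊆ I` and the leading
monomial of every nonzero element of `I` is divisible by the leading monomial of some
nonzero element of `G`. -/
def IsGrobnerBasis {n : ℕ} (G : Set (MvPolynomial (Fin n) ℂ))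
    (I : Ideal (MvPolynomial (Fin n) ℂ)) : Prop :=
  G ⊆ I ∧ ∀ f ∈ I, f ≠ 0 → ∃ g ∈ G, g ≠ 0 ∧ ∀ i, lm g i ≤ lm f i

/-- `G` is the reduced Gröbner basis of `I`: a Gröbner basis consisting of monic
polynomials, no monomial of any element being divisible by the leading monomial of
another element. -/
def IsReducedGrobnerBasis {n : ℕ} (G : Set (MvPolynomial (Fin n) ℂ))
    (I : Ideal (MvPolynomial (Fin n) ℂ)) : Prop :=
  IsGrobnerBasis G I ∧ (0 : MvPolynomial (Fin n) ℂ) ∉ G ∧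
    ∀ g ∈ G, g.coeff (lm g) = 1 ∧
      ∀ g' ∈ G, g' ≠ g → ∀ ν ∈ g.support, ¬ ∀ i, lm g' i ≤ ν i

/-- The substitution `xᵢ ↦ xᵢ^m`. -/
noncomputable def subst (n m : ℕ) :
    MvPolynomial (Fin n) ℂ →ₐ[ℂ] MvPolynomial (Fin n) ℂ :=
  MvPolynomial.bind₁ fun i => (X i : MvPolynomial (Fin n) ℂ) ^ m

namespace GrobnerAux

variable {n m : ℕ}

lemma toLex_lm_spec {f : MvPolynomial (Fin n) ℂ} (hf : f ≠ 0) :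
    lm f ∈ f.support ∧ ∀ μ ∈ f.support, toLex μ ≤ toLex (lm f) := by
  have hs : (f.support.image (toLex : (Fin n →₀ ℕ) → Lex (Fin n →₀ ℕ))).Nonempty :=
    (MvPolynomial.support_nonempty.2 hf).image _
  obtain ⟨b, hb⟩ := Finset.max_of_nonempty hs
  have hlm : lm f = ofLex b := by unfold lm; rw [hb]; rfl
  have hb2 : b ∈ f.support.image (toLex : (Fin n →₀ ℕ) → Lex (Fin n →₀ ℕ)) :=
    Finset.mem_of_max hb
  obtain ⟨μ, hμ, hμb⟩ := Finset.mem_image.mp hb2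
  constructor
  · rw [hlm, ← hμb]; exact hμ
  · intro ν hν
    have := Finset.le_max (Finset.mem_image_of_mem toLex hν)
    rw [hb] at this
    rw [hlm]
    exact_mod_cast this

lemma lm_mem_support {f : MvPolynomial (Fin n) ℂ} (hf : f ≠ 0) : lm f ∈ f.support :=
  (toLex_lm_spec hf).1

lemma le_toLex_lm {f : MvPolynomial (Fin n) ℂ} {μ} (hμ : μ ∈ f.support) :
    toLex μ ≤ toLex (lm f) := by
  have hf : f ≠ 0 := by intro h; rw [h] at hμ; simp at hμ
  exact (toLex_lm_spec hf).2 μ hμ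

lemma lm_eq {f : MvPolynomial (Fin n) ℂ} {μ} (h1 : μ ∈ f.support)
    (h2 : ∀ ν ∈ f.support, toLex ν ≤ toLex μ) : lm f = μ := by
  have hf : f ≠ 0 := by intro h; rw [h] at h1; simp at h1
  exact toLex.injective (le_antisymm (h2 _ (lm_mem_support hf)) (le_toLex_lm h1))

lemma toLex_smul_add_lt {a b r : Fin n →₀ ℕ} (hm : 0 < m) (h : toLex a < toLex b) :
    toLex (m • a + r) < toLex (m • b + r) := by
  obtain ⟨j, hj1, hj2⟩ := Finsupp.lex_def.mp h
  refine Finsupp.lex_def.mpr ⟨j, fun d hd => ?_, ?_⟩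
  · have hd' : a d = b d := hj1 d hd
    show (m • a + r) d = (m • b + r) d
    simp only [Finsupp.add_apply, Finsupp.smul_apply, smul_eq_mul, hd']
  · show (m • a + r) j < (m • b + r) j
    have hj2' : a j < b j := hj2
    simp only [Finsupp.add_apply, Finsupp.smul_apply, smul_eq_mul]
    exact Nat.add_lt_add_right ((mul_lt_mul_iff_right₀ hm).mpr hj2') _

lemma toLex_smul_add_le_iff {a b r : Fin n →₀ ℕ} (hm : 0 < m) :
    toLex (m • a + r) ≤ toLex (m • b + r) ↔ toLex a ≤ toLex b := by
  constructor
  · intro h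
    by_contra hc
    rw [not_le] at hc
    exact absurd h (not_le.mpr (toLex_smul_add_lt hm hc))
  · intro h
    rcases eq_or_lt_of_le h with heq | hlt
    · rw [toLex.injective heq]
    · exact le_of_lt (toLex_smul_add_lt hm hlt)

lemma smul_add_injective (hm : 0 < m) (r : Fin n →₀ ℕ) :
    Function.Injective (fun ν : Fin n →₀ ℕ => m • ν + r) := by
  intro a b hab
  ext i
  have := DFunLike.congr_fun hab i
  simp only [Finsupp.add_apply, Finsupp.smul_apply, smul_eq_mul] at this
  exact Nat.eq_of_mul_eq_mul_left hm (by omega)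

lemma subst_monomial (hm : 0 < m) (d : Fin n →₀ ℕ) (c : ℂ) :
    subst n m (monomial d c) = monomial (m • d) c := by
  have hsupp : (m • d).support = d.support := Finsupp.support_smul_eq hm.ne'
  rw [subst, bind₁_monomial]
  have hmon : (monomial (m • d) c : MvPolynomial (Fin n) ℂ) = C c * monomial (m • d) 1 := by
    rw [C_mul_monomial, mul_one]
  rw [hmon, ← prod_X_pow_eq_monomial, hsupp]
  congr 1
  apply Finset.prod_congr rfl
  intro i _
  rw [← pow_mul, Finsupp.smul_apply, smul_eq_mul]

lemma coeff_smul_subst (hm : 0 < m) (ν : Fin n →₀ ℕ) (g : MvPolynomial (Fin n) ℂ) :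
    coeff (m • ν) (subst n m g) = coeff ν g := by
  conv_lhs => rw [g.as_sum, map_sum]
  rw [coeff_sum]
  simp_rw [subst_monomial hm, coeff_monomial]
  have : ∀ v ∈ g.support, (if m • v = m • ν then coeff v g else 0)
      = if v = ν then coeff v g else 0 := by
    intro v _
    congr 1
    simp only [eq_iff_iff]
    constructor
    · intro h
      ext i
      exact Nat.eq_of_mul_eq_mul_left hm (by simpa using DFunLike.congr_fun h i)
    · intro h; rw [h]
  rw [Finset.sum_congr rfl this, Finset.sum_ite_eq' g.support ν (fun v => coeff v g)]
  split_ifs with h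
  · rfl
  · rw [MvPolynomial.notMem_support_iff.mp h]

lemma support_subst_subset (hm : 0 < m) (g : MvPolynomial (Fin n) ℂ) :
    (subst n m g).support ⊆ g.support.image (fun ν => m • ν) := by
  intro μ hμ
  rw [MvPolynomial.mem_support_iff] at hμ
  conv at hμ => rw [g.as_sum, map_sum, coeff_sum]
  obtain ⟨v, hv, hvne⟩ := Finset.exists_ne_zero_of_sum_ne_zero hμ
  rw [subst_monomial hm, coeff_monomial] at hvne
  rw [Finset.mem_image]
  refine ⟨v, hv, ?_⟩
  by_contra hc
  exact hvne (if_neg hc)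

lemma subst_ne_zero (hm : 0 < m) {g : MvPolynomial (Fin n) ℂ} (hg : g ≠ 0) :
    subst n m g ≠ 0 := by
  intro h
  apply hg
  have := coeff_smul_subst hm (lm g) g
  rw [h, coeff_zero] at this
  exact absurd this.symm (MvPolynomial.mem_support_iff.mp (lm_mem_support hg))

lemma lm_subst (hm : 0 < m) {g : MvPolynomial (Fin n) ℂ} (hg : g ≠ 0) :
    lm (subst n m g) = m • lm g := by
  apply lm_eq
  · rw [MvPolynomial.mem_support_iff, coeff_smul_subst hm]
    exact MvPolynomial.mem_support_iff.mp (lm_mem_support hg)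
  · intro ν hν
    obtain ⟨v, hv, rfl⟩ := Finset.mem_image.mp (support_subst_subset hm g hν)
    have h1 : toLex v ≤ toLex (lm g) := le_toLex_lm hv
    have := (toLex_smul_add_le_iff (r := 0) hm).mpr h1
    simpa using this

noncomputable def phi (m : ℕ) (hm : 0 < m) (r : Fin n →₀ ℕ)
    (h : MvPolynomial (Fin n) ℂ) : MvPolynomial (Fin n) ℂ :=
  ∑ ν ∈ h.support.preimage (fun ν => m • ν + r)
      ((smul_add_injective hm r).injOn),
    monomial ν (coeff (m • ν + r) h)

lemma coeff_phi (hm : 0 < m) (r ν : Fin n →₀ ℕ) (h : MvPolynomial (Fin n) ℂ) :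
    coeff ν (phi m hm r h) = coeff (m • ν + r) h := by
  rw [phi, coeff_sum]
  simp_rw [coeff_monomial]
  rw [Finset.sum_ite_eq' _ ν (fun ν' => coeff (m • ν' + r) h)]
  split_ifs with hmem
  · rfl
  · rw [Finset.mem_preimage] at hmem
    exact (MvPolynomial.notMem_support_iff.mp hmem).symm

lemma phi_add (hm : 0 < m) (r : Fin n →₀ ℕ) (h₁ h₂ : MvPolynomial (Fin n) ℂ) :
    phi m hm r (h₁ + h₂) = phi m hm r h₁ + phi m hm r h₂ := by
  ext ν; simp [coeff_phi hm]

lemma phi_zero (hm : 0 < m) (r : Fin n →₀ ℕ) : phi m hm r 0 = 0 := by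
  ext ν; simp [coeff_phi hm]

lemma phi_X_pow_mul (hm : 0 < m) {r : Fin n →₀ ℕ} (hr : ∀ i, r i < m)
    (i : Fin n) (h : MvPolynomial (Fin n) ℂ) :
    phi m hm r ((X i) ^ m * h) = X i * phi m hm r h := by
  ext ν
  rw [coeff_phi hm, X_pow_eq_monomial, coeff_monomial_mul',
    show (X i : MvPolynomial (Fin n) ℂ) = monomial (Finsupp.single i 1) 1 from rfl,
    coeff_monomial_mul']
  simp only [Finsupp.single_le_iff, one_mul]
  by_cases hi : 1 ≤ ν i
  · rw [if_pos hi, if_pos (by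
      simp only [Finsupp.add_apply, Finsupp.smul_apply, smul_eq_mul]
      calc m = m * 1 := (mul_one m).symm
        _ ≤ m * ν i := Nat.mul_le_mul_left m hi
        _ ≤ m * ν i + r i := Nat.le_add_right _ _)]
    rw [coeff_phi hm]
    congr 1
    ext j
    simp only [Finsupp.tsub_apply, Finsupp.add_apply, Finsupp.smul_apply, smul_eq_mul,
      Finsupp.single_apply]
    rcases eq_or_ne i j with hji | hji
    · subst hji
      obtain ⟨k, hk⟩ : ∃ k, ν i = k + 1 := ⟨ν i - 1, by omega⟩
      simp only [hk, if_pos rfl, ite_true, Nat.mul_succ, Nat.add_sub_cancel]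
      omega
    · simp [hji]
  · rw [if_neg hi, if_neg (by
      simp only [Finsupp.add_apply, Finsupp.smul_apply, smul_eq_mul, not_le]
      have hνi : ν i = 0 := by omega
      rw [hνi, mul_zero, zero_add]
      exact hr i)]

lemma phi_subst_mul (hm : 0 < m) {r : Fin n →₀ ℕ} (hr : ∀ i, r i < m)
    (q : MvPolynomial (Fin n) ℂ) :
    ∀ h : MvPolynomial (Fin n) ℂ, phi m hm r (subst n m q * h) = q * phi m hm r h := by
  induction q using MvPolynomial.induction_on with
  | C a =>
    intro h
    have hC : subst n m (C a) = C a := by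
      rw [show (C a : MvPolynomial (Fin n) ℂ) = algebraMap ℂ _ a from rfl]
      exact (subst n m).commutes a
    rw [hC]
    ext ν
    rw [coeff_phi hm, coeff_C_mul, coeff_C_mul, coeff_phi hm]
  | add p q hp hq =>
    intro h
    rw [map_add, add_mul, phi_add hm, hp h, hq h, add_mul]
  | mul_X p i hp =>
    intro h
    have : subst n m (p * X i) * h = subst n m p * ((X i) ^ m * h) := by
      rw [map_mul, show subst n m (X i) = (X i) ^ m from bind₁_X_right _ i]
      ring
    rw [this, hp, phi_X_pow_mul hm hr, mul_assoc]

lemma phi_mem_span (hm : 0 < m) {r : Fin n →₀ ℕ} (hr : ∀ i, r i < m)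
    (S : Set (MvPolynomial (Fin n) ℂ)) {f : MvPolynomial (Fin n) ℂ}
    (hf : f ∈ Ideal.span (subst n m '' S)) :
    phi m hm r f ∈ Ideal.span S := by
  have H : ∀ a : MvPolynomial (Fin n) ℂ, phi m hm r (a * f) ∈ Ideal.span S := by
    refine Submodule.span_induction
      (p := fun x _ => ∀ a : MvPolynomial (Fin n) ℂ, phi m hm r (a * x) ∈ Ideal.span S)
      ?_ ?_ ?_ ?_ hf
    · rintro x ⟨p, hp, rfl⟩ a
      rw [mul_comm, phi_subst_mul hm hr]
      exact Ideal.mul_mem_right _ _ (Ideal.subset_span hp)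
    · intro a
      rw [mul_zero, phi_zero hm]
      exact zero_mem _
    · intro x y _ _ hx hy a
      rw [mul_add, phi_add hm]
      exact add_mem (hx a) (hy a)
    · intro b x _ hx a
      rw [smul_eq_mul, ← mul_assoc]
      exact hx (a * b)
  simpa using H 1

end GrobnerAux

open GrobnerAux in
/-- if `G` is the reduced Gröbner basis of `⟨S⟩` (w.r.t. lex), then
`G^m = {g(x₁^m,…,xₙ^m) : g ∈ G}` is a Gröbner basis of `⟨S^m⟩`. -/
theorem grobner_of_power_substitution (n m : ℕ) (hm : 0 < m)
    (S G : Set (MvPolynomial (Fin n) ℂ))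
    (hG : IsReducedGrobnerBasis G (Ideal.span S)) :
    IsGrobnerBasis (subst n m '' G) (Ideal.span (subst n m '' S)) := by
  constructor
  · rintro _ ⟨g, hg, rfl⟩
    rw [← Ideal.map_span (subst n m)]
    exact Ideal.mem_map_of_mem _ (hG.1.1 hg)
  · intro f hf hfne
    set μ := lm f with hμdef
    set r : Fin n →₀ ℕ := μ.mapRange (· % m) (Nat.zero_mod m) with hrdef
    set ν0 : Fin n →₀ ℕ := μ.mapRange (· / m) (Nat.zero_div m) with hν0def
    have hr : ∀ i, r i < m := fun i => by
      rw [hrdef]; simp only [Finsupp.mapRange_apply]; exact Nat.mod_lt _ hm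
    have hμ : m • ν0 + r = μ := by
      ext i
      simp only [Finsupp.add_apply, Finsupp.smul_apply, smul_eq_mul, hrdef, hν0def,
        Finsupp.mapRange_apply]
      exact Nat.div_add_mod (μ i) m
    set f' := phi m hm r f with hf'def
    have hf' : f' ∈ Ideal.span S := phi_mem_span hm hr S hf
    have hc : coeff ν0 f' = coeff μ f := by rw [hf'def, coeff_phi hm, hμ]
    have hμsupp : μ ∈ f.support := lm_mem_support hfne
    have hne : f' ≠ 0 := by
      intro h
      rw [h, coeff_zero] at hc
      exact (MvPolynomial.mem_support_iff.mp hμsupp) hc.symm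
    have hlm' : lm f' = ν0 := by
      apply lm_eq
      · rw [MvPolynomial.mem_support_iff, hc]
        exact MvPolynomial.mem_support_iff.mp hμsupp
      · intro ν hν
        have h1 : m • ν + r ∈ f.support := by
          rw [MvPolynomial.mem_support_iff]
          rw [MvPolynomial.mem_support_iff, hf'def, coeff_phi hm] at hν
          exact hν
        have h2 : toLex (m • ν + r) ≤ toLex μ := le_toLex_lm h1
        rw [← hμ] at h2
        exact (toLex_smul_add_le_iff hm).mp h2
    obtain ⟨g, hgG, hgne, hglm⟩ := hG.1.2 f' hf' hne
    refine ⟨subst n m g, ⟨g, hgG, rfl⟩, subst_ne_zero hm hgne, fun i => ?_⟩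
    rw [lm_subst hm hgne]
    have h1 : lm g i ≤ ν0 i := hlm' ▸ hglm i
    have h2 : m * ν0 i + r i = μ i := by
      have := DFunLike.congr_fun hμ i
      simpa using this
    calc (m • lm g) i = m * lm g i := by simp
      _ ≤ m * ν0 i := Nat.mul_le_mul_left m h1
      _ ≤ μ i := by omega
end

section
/- The number of Dyck vectors ν ∈ N^n with total sum ν_1+...+ν_n = k equals the ballot number ((n-k)/(n+k))·binom(n+k, k), for 0 ≤ k ≤ n-1, and equals 0 for k ≥ n. -/
/-- A Dyck vector: `ν_1 + … + ν_j ≤ j - 1` for all `1 ≤ j ≤ n` (0-indexed form). -/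
def IsDyck {n : ℕ} (ν : Fin n → ℕ) : Prop :=
  ∀ k : Fin n, ∑ i ∈ Finset.univ.filter (· ≤ k), ν i ≤ (k : ℕ)

abbrev DV (n k : ℕ) : Type := {ν : Fin n → ℕ // IsDyck ν ∧ ∑ i, ν i = k}

instance DV.finite (n k : ℕ) : Finite (DV n k) := by
  apply Finite.of_injective (fun ν : DV n k => fun i : Fin n => (⟨ν.1 i, by
    have h := Finset.single_le_sum (f := ν.1) (fun j _ => Nat.zero_le _) (Finset.mem_univ i)
    have hs := ν.2.2
    omega⟩ : Fin (k+1)))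
  intro a b h
  ext i
  exact congrArg Fin.val (congrFun h i)

lemma dyck_zero (n : ℕ) : IsDyck (fun _ : Fin n => 0) := by
  intro k; simp

lemma card_DV_zero (n : ℕ) : Nat.card (DV n 0) = 1 := by
  rw [Nat.card_eq_one_iff_unique]
  constructor
  · constructor
    intro a b
    ext i
    rw [(Finset.sum_eq_zero_iff.1 a.2.2) i (Finset.mem_univ i),
        (Finset.sum_eq_zero_iff.1 b.2.2) i (Finset.mem_univ i)]
  · exact ⟨⟨fun _ => 0, dyck_zero n, by simp⟩⟩

lemma card_DV_big {n k : ℕ} (hn : 0 < n) (hk : n ≤ k) : Nat.card (DV n k) = 0 := by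
  have : IsEmpty (DV n k) := by
    constructor
    rintro ⟨ν, hd, hs⟩
    obtain ⟨m, rfl⟩ : ∃ m, n = m + 1 := ⟨n - 1, by omega⟩
    have h := hd (Fin.last m)
    rw [Finset.filter_true_of_mem (fun i _ => Fin.le_last i)] at h
    rw [hs] at h
    simp [Fin.last] at h
    omega
  exact Nat.card_of_isEmpty

lemma filter_castSucc_sum {n : ℕ} (ν : Fin (n+1) → ℕ) (κ : Fin n) :
    ∑ i ∈ Finset.univ.filter (· ≤ κ.castSucc), ν i
      = ∑ i ∈ Finset.univ.filter (· ≤ κ), ν i.castSucc := by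
  have hset : (Finset.univ.filter (· ≤ κ.castSucc) : Finset (Fin (n+1)))
      = (Finset.univ.filter (· ≤ κ)).map ⟨Fin.castSucc, Fin.castSucc_injective n⟩ := by
    ext i
    simp only [Finset.mem_filter, Finset.mem_univ, true_and, Finset.mem_map,
      Function.Embedding.coeFn_mk]
    constructor
    · intro hi
      have hiv : (i : ℕ) ≤ (κ : ℕ) := hi
      refine ⟨⟨i, by omega⟩, hiv, ?_⟩
      ext; simp
    · rintro ⟨a, ha, rfl⟩
      exact ha
  rw [hset, Finset.sum_map]
  rfl

def dvEquiv {n k : ℕ} (hk : k ≤ n) : DV (n+1) k ≃ Σ j : Fin (k+1), DV n j where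
  toFun ν := ⟨⟨∑ i : Fin n, ν.1 i.castSucc, by
      have h := ν.2.2
      rw [Fin.sum_univ_castSucc] at h
      omega⟩, ⟨Fin.init ν.1, by
      intro κ
      have h := ν.2.1 κ.castSucc
      rw [filter_castSucc_sum] at h
      simpa [Fin.init] using h, rfl⟩⟩
  invFun p := ⟨Fin.snoc p.2.1 (k - p.1), by
      obtain ⟨⟨j, hj⟩, μ, hμd, hμs⟩ := p
      intro κ
      refine Fin.lastCases ?_ ?_ κ
      · rw [Finset.filter_true_of_mem (fun i _ => Fin.le_last i)]
        rw [Fin.sum_univ_castSucc]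
        simp only [Fin.snoc_castSucc, Fin.snoc_last, hμs]
        simp [Fin.last]
        omega
      · intro κ'
        rw [filter_castSucc_sum]
        simp only [Fin.snoc_castSucc]
        simpa using hμd κ', by
      obtain ⟨⟨j, hj⟩, μ, hμd, hμs⟩ := p
      rw [Fin.sum_univ_castSucc]
      simp only [Fin.snoc_castSucc, Fin.snoc_last, hμs]
      omega⟩
  left_inv := by
    rintro ⟨ν, hd, hs⟩
    ext : 1
    have hsum : ∑ i : Fin n, ν i.castSucc + ν (Fin.last n) = k := by
      rw [← Fin.sum_univ_castSucc]; exact hs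
    have h2 : k - ∑ i : Fin n, ν i.castSucc = ν (Fin.last n) := by omega
    simp only [h2]
    exact Fin.snoc_init_self ν
  right_inv := by
    rintro ⟨⟨j, hj⟩, μ, hμd, hμs⟩
    have h1 : ∑ i : Fin n, Fin.snoc (α := fun _ => ℕ) μ (k - j) i.castSucc = j := by
      simp only [Fin.snoc_castSucc]; exact hμs
    refine Sigma.ext ?_ ?_
    · simpa using h1
    · refine Subtype.heq_iff_coe_eq ?_ |>.2 ?_ <;> simp_all [Fin.init]

lemma card_DV_rec {n k : ℕ} (hk : k ≤ n) :
    Nat.card (DV (n+1) k) = ∑ j ∈ Finset.range (k+1), Nat.card (DV n j) := by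
  rw [Nat.card_congr (dvEquiv hk)]
  have : ∀ j, Fintype (DV n j) := fun j => Fintype.ofFinite _
  rw [Nat.card_eq_fintype_card, Fintype.card_sigma]
  rw [Finset.sum_range fun j => Nat.card (DV n j)]
  congr 1
  ext j
  rw [Nat.card_eq_fintype_card]

def gball : ℕ → ℕ → ℕ
  | _, 0 => 1
  | 0, _+1 => 0
  | n+1, k+1 => if n ≤ k then 0 else gball (n+1) k + gball n (k+1)
termination_by n k => (n, k)

lemma card_DV_eq_gball : ∀ n k, Nat.card (DV n k) = gball n k := by
  intro n
  induction n with
  | zero =>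
    intro k
    cases k with
    | zero => rw [card_DV_zero]; simp [gball]
    | succ k =>
      have : IsEmpty (DV 0 (k+1)) := by
        constructor
        rintro ⟨ν, _, hs⟩
        simp at hs
      rw [Nat.card_of_isEmpty]; simp [gball]
  | succ n ih =>
    intro k
    induction k with
    | zero => rw [card_DV_zero]; simp [gball]
    | succ k ihk =>
      by_cases h : n ≤ k
      · rw [card_DV_big (Nat.succ_pos n) (by omega)]
        simp [gball, h]
      · rw [card_DV_rec (by omega : k + 1 ≤ n), Finset.sum_range_succ,
          ← card_DV_rec (by omega : k ≤ n), ihk, ih (k+1)]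
        simp [gball, h]

lemma gball_mul : ∀ n, 0 < n → ∀ k, k ≤ n → gball n k * (n + k) = (n - k) * (n + k).choose k := by
  intro n
  induction n with
  | zero => omega
  | succ m ihm =>
    intro _ k
    induction k with
    | zero => simp [gball]
    | succ k ihk =>
      intro hk1
      by_cases h : k + 1 = m + 1
      · have h0 : gball (m+1) (k+1) = 0 := by
          simp only [gball]
          rw [if_pos (by omega)]
        rw [h0, h]
        simp
      · have hk2 : k + 2 ≤ m + 1 := by omega
        have hA := ihk (by omega)
        have hB := ihm (by omega) (k+1) (by omega)
        have hR : (m+1+k).choose (k+1) * (k+1) = (m+1+k).choose k * (m+1) := by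
          have := Nat.choose_succ_right_eq (m+1+k) k
          rwa [show m + 1 + k - k = m + 1 by omega] at this
        have hP : (m+1+k+1).choose (k+1) = (m+1+k).choose k + (m+1+k).choose (k+1) :=
          Nat.choose_succ_succ (m+1+k) k
        have hgrec : gball (m+1) (k+1) = gball (m+1) k + gball m (k+1) := by
          simp only [gball]
          rw [if_neg (by omega)]
        have hm : m + (k+1) = m + 1 + k := by omega
        rw [hm] at hB
        have key : (gball (m+1) (k+1) * (m + 1 + (k+1))) * (m + 1 + k)
            = ((m + 1 - (k+1)) * (m + 1 + (k+1)).choose (k+1)) * (m + 1 + k) := by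
          rw [hgrec, show m + 1 + (k+1) = m + 1 + k + 1 by ring, hP]
          zify [show k ≤ m + 1 by omega, show k + 1 ≤ m by omega,
            show k + 1 ≤ m + 1 by omega] at hA hB hR ⊢
          linear_combination ((m:ℤ)+k+2) * hA + ((m:ℤ)+k+2) * hB - 2 * hR
        exact Nat.eq_of_mul_eq_mul_right (by omega) key

/-- the number of Dyck vectors in `ℕ^n` with total sum `k` is the
ballot number `((n-k)/(n+k))·C(n+k,k)` for `0 ≤ k ≤ n-1`, and `0` for `k ≥ n`. -/
theorem card_dyck_vectors_of_sum (n k : ℕ) (hn : 0 < n) :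
    (k < n →
      Nat.card {ν : Fin n → ℕ // IsDyck ν ∧ ∑ i, ν i = k}
        = (n - k) * (n + k).choose k / (n + k)) ∧
    (n ≤ k → Nat.card {ν : Fin n → ℕ // IsDyck ν ∧ ∑ i, ν i = k} = 0) := by
  constructor
  · intro hkn
    have h1 := card_DV_eq_gball n k
    have h2 := gball_mul n hn k (by omega)
    show Nat.card (DV n k) = _
    rw [h1, ← h2, Nat.mul_div_cancel _ (by omega : 0 < n + k)]
  · intro h
    exact card_DV_big hn h
end

section
/- Substituting t = 1 into the Hilbert series identity: (1+1+...+1)^n · F_n(1) = m^n · C_n, i.e., Σ_{k=0}^{n-1} ((n-k)/(n+k))·binom(n+k, k) = C_n = (1/(n+1))·binom(2n, n). -/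
open Finset

/-- hockey stick -/
lemma hs_aux (c : ℕ) : ∀ t : ℕ, ∑ j ∈ range t, (c + j).choose c = (c + t).choose (c + 1) := by
  intro t
  induction t with
  | zero => simp [Nat.choose_eq_zero_of_lt]
  | succ t ih =>
      rw [Finset.sum_range_succ, ih, ← Nat.add_assoc, Nat.choose_succ_succ (c + t) c]
      simp only [Nat.succ_eq_add_one]
      omega

/-- absorb top: `(a+1) * C(a,k) = C(a+1,k) * (a+1-k)`. -/
lemma top_aux (a k : ℕ) : (a + 1) * a.choose k = (a + 1).choose k * (a + 1 - k) :=
  (Nat.add_one_mul_choose_eq a k).trans (Nat.choose_succ_right_eq (a + 1) k)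

lemma le_aux (n j : ℕ) (h : j + 1 ≤ n) :
    (n + j).choose j ≤ (n + j).choose (j + 1) := by
  have h1 : (n + j + 1) * (n + j).choose (j + 1) = (n + j + 1).choose (j + 1) * n := by
    have := top_aux (n + j) (j + 1)
    rwa [show n + j + 1 - (j + 1) = n by omega] at this
  have h2 : (n + j + 1) * (n + j).choose j = (n + j + 1).choose (j + 1) * (j + 1) :=
    Nat.add_one_mul_choose_eq (n + j) j
  have : (n + j + 1) * (n + j).choose j ≤ (n + j + 1) * (n + j).choose (j + 1) := by
    rw [h1, h2]; exact Nat.mul_le_mul_left _ h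
  exact Nat.le_of_mul_le_mul_left this (by omega)

/-- key term lemma -/
lemma term_aux (n j : ℕ) (h : j + 1 < n) :
    (n - (j + 1)) * (n + (j + 1)).choose (j + 1) / (n + (j + 1))
      = (n + j).choose (j + 1) - (n + j).choose j := by
  have h1 : (n + j + 1) * (n + j).choose (j + 1) = (n + j + 1).choose (j + 1) * n := by
    have := top_aux (n + j) (j + 1)
    rwa [show n + j + 1 - (j + 1) = n by omega] at this
  have h2 : (n + j + 1) * (n + j).choose j = (n + j + 1).choose (j + 1) * (j + 1) :=
    Nat.add_one_mul_choose_eq (n + j) j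
  have hkey : (n + (j + 1)) * ((n + j).choose (j + 1) - (n + j).choose j)
      = (n - (j + 1)) * (n + (j + 1)).choose (j + 1) := by
    rw [show n + (j + 1) = n + j + 1 by omega, Nat.mul_sub, h1, h2, ← Nat.mul_sub,
      Nat.mul_comm]
  rw [← hkey, Nat.mul_div_cancel_left _ (by omega : 0 < n + (j + 1))]

lemma sum_eq_catalan_aux (N : ℕ) :
    (∑ k ∈ Finset.range (N + 1),
        (N + 1 - k) * (N + 1 + k).choose k / (N + 1 + k)) = catalan (N + 1) := by
  have hsum : (∑ k ∈ Finset.range (N + 1),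
      (N + 1 - k) * (N + 1 + k).choose k / (N + 1 + k))
      = 1 + ∑ j ∈ Finset.range N,
          ((N + 1 + j).choose (j + 1) - (N + 1 + j).choose j) := by
    rw [Finset.sum_range_succ']
    have h0 : (N + 1 - 0) * (N + 1 + 0).choose 0 / (N + 1 + 0) = 1 := by simp
    rw [h0, Nat.add_comm]
    congr 1
    apply Finset.sum_congr rfl
    intro j hj
    exact term_aux (N + 1) j (by simpa using Finset.mem_range.mp hj)
  have hA : ∑ j ∈ Finset.range N, (N + 1 + j).choose (j + 1)
      = (2 * N + 1).choose (N + 1) - 1 := by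
    have hterm : ∀ j ∈ Finset.range N, (N + 1 + j).choose (j + 1) = (N + 1 + j).choose N := by
      intro j hj
      have := Nat.choose_symm (show j + 1 ≤ N + 1 + j by omega)
      rw [show N + 1 + j - (j + 1) = N by omega] at this; exact this.symm
    rw [Finset.sum_congr rfl hterm]
    have h1 : ∑ j ∈ Finset.range (N + 1), (N + j).choose N = (N + (N + 1)).choose (N + 1) :=
      hs_aux N (N + 1)
    rw [Finset.sum_range_succ'] at h1
    simp only [Nat.add_zero, Nat.choose_self] at h1
    have h2 : ∑ j ∈ Finset.range N, (N + (j + 1)).choose N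
        = ∑ j ∈ Finset.range N, (N + 1 + j).choose N := by
      apply Finset.sum_congr rfl; intro j _; congr 1; omega
    rw [h2] at h1
    rw [show N + (N + 1) = 2 * N + 1 by omega] at h1
    omega
  have hB : ∑ j ∈ Finset.range N, (N + 1 + j).choose j
      = (2 * N + 1).choose (N + 2) := by
    have hterm : ∀ j ∈ Finset.range N, (N + 1 + j).choose j = (N + 1 + j).choose (N + 1) := by
      intro j hj
      have := Nat.choose_symm (show j ≤ N + 1 + j by omega)
      rw [show N + 1 + j - j = N + 1 by omega] at this; exact this.symm
    rw [Finset.sum_congr rfl hterm]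
    have h1 := hs_aux (N + 1) N
    rwa [show N + 1 + N = 2 * N + 1 by omega, show N + 1 + 1 = N + 2 by omega] at h1
  have hle : ∀ j ∈ Finset.range N, (N + 1 + j).choose j ≤ (N + 1 + j).choose (j + 1) := by
    intro j hj
    exact le_aux (N + 1) j (by have := Finset.mem_range.mp hj; omega)
  rw [hsum, Finset.sum_tsub_distrib _ hle, hA, hB]
  -- now pure choose arithmetic
  set X := (2 * N + 1).choose (N + 1) with hX
  set Y := (2 * N + 1).choose (N + 2) with hY
  have hXpos : 0 < X := Nat.choose_pos (by omega)
  have e1 : Y * (N + 2) = X * N := by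
    have := Nat.choose_succ_right_eq (2 * N + 1) (N + 1)
    rwa [show 2 * N + 1 - (N + 1) = N by omega] at this
  have e2 : (2 * N + 2).choose (N + 1) = 2 * X := by
    have h3 : (2 * N + 2).choose (N + 1) = (2 * N + 1).choose N + (2 * N + 1).choose (N + 1) :=
      Nat.choose_succ_succ (2 * N + 1) N
    have h4 : (2 * N + 1).choose N = X := by
      have := Nat.choose_symm (show N ≤ 2 * N + 1 by omega)
      rw [show 2 * N + 1 - N = N + 1 by omega] at this
      rw [← this, hX]
    omega
  have hYX : Y < X := by nlinarith
  have hclose : 1 + (X - 1 - Y) = X - Y := by omega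
  rw [hclose]
  have hcat : (N + 2) * catalan (N + 1) = (2 * N + 2).choose (N + 1) := by
    have := succ_mul_catalan_eq_centralBinom (N + 1)
    rwa [Nat.centralBinom_eq_two_mul_choose, show 2 * (N + 1) = 2 * N + 2 by omega] at this
  have hmul : (N + 2) * (X - Y) = (N + 2) * catalan (N + 1) := by
    rw [hcat, e2, Nat.mul_sub]
    have : (N + 2) * Y = X * N := by rw [Nat.mul_comm]; exact e1
    rw [this]
    have : (N + 2) * X = X * N + 2 * X := by ring
    omega
  exact Nat.eq_of_mul_eq_mul_left (by omega) hmul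

/-- evaluating the Hilbert series identity at `t = 1`:
`(1+⋯+1)^n · Fₙ(1) = mⁿ · Cₙ`, i.e. `Σ_{k=0}^{n-1} ((n-k)/(n+k))·C(n+k,k) = Cₙ`. -/
theorem ballot_sum_eq_catalan (n m : ℕ) (hn : 0 < n) (hm : 0 < m) :
    m ^ n * (∑ k ∈ Finset.range n, (n - k) * (n + k).choose k / (n + k))
        = m ^ n * catalan n ∧
    (∑ k ∈ Finset.range n, (n - k) * (n + k).choose k / (n + k)) = catalan n := by
  obtain ⟨N, rfl⟩ := Nat.exists_eq_succ_of_ne_zero hn.ne'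
  have h := sum_eq_catalan_aux N
  exact ⟨by rw [h], h⟩
end
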